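/- If the bipartite graph of the Rothe diagram of w contains a cycle, then w contains one of the patterns 3412, 4312, 3421, 4321; in particular, any northwest diagram whose bipartite graph contains a cycle contains a full 2×2 square {(p,x),(p,y),(q,x),(q,y)} with p<q, x<y as a subset. -/

import Mathlib

/-- The Rothe diagram of `w`: `(a, b) ∈ D(w)` iff `b = w j` for some `j > a` with `w j < w a`. -/
def Rothe {n : ℕ} (w : Equiv.Perm (Fin n)) (c : Fin n × Fin n) : Prop :=
  ∃ j : Fin n, c.1 < j ∧ w j < w c.1 ∧ c.2 = w j

/-- The bipartite graph of a diagram `D ⊆ α × β`: vertices are rows (`Sum.inl`) and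
columns (`Sum.inr`), with an edge joining row `i` to column `j` for each cell `(i,j) ∈ D`. -/
def diagGraph {α β : Type*} (D : Set (α × β)) : SimpleGraph (α ⊕ β) where
  Adj a b := ∃ i j, (i, j) ∈ D ∧
    ((a = Sum.inl i ∧ b = Sum.inr j) ∨ (a = Sum.inr j ∧ b = Sum.inl i))
  symm := by
    constructor
    rintro a b ⟨i, j, hij, h | h⟩
    · exact ⟨i, j, hij, Or.inr ⟨h.2, h.1⟩⟩
    · exact ⟨i, j, hij, Or.inl ⟨h.2, h.1⟩⟩
  loopless := by
    constructor
    rintro a ⟨i, j, hij, ⟨h1, h2⟩ | ⟨h1, h2⟩⟩ <;> rw [h1] at h2 <;> simp at h2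

/-- `w` contains the pattern `v` (on `k` letters). -/
def Contains {n k : ℕ} (w : Equiv.Perm (Fin n)) (v : Fin k → Fin k) : Prop :=
  ∃ f : Fin k → Fin n, StrictMono f ∧ ∀ a b, v a < v b ↔ w (f a) < w (f b)

section Aux

open SimpleGraph

/-- Any vertex on a cycle has two distinct neighbours lying on the cycle. -/
lemma two_neighbors {V : Type*} [DecidableEq V] {G : SimpleGraph V} {v u : V} {c : G.Walk v v}
    (hc : c.IsCycle) (hu : u ∈ c.support) :
    ∃ a b, a ≠ b ∧ G.Adj u a ∧ G.Adj u b ∧ a ∈ c.support ∧ b ∈ c.support := by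
  have hmem : ∀ x, x ∈ (c.rotate u hu).support → x ∈ c.support := by
    intro x hx
    rw [(c.rotate u hu).support_eq_cons] at hx
    rcases List.mem_cons.mp hx with rfl | hx
    · exact hu
    · exact List.mem_of_mem_tail (((c.support_rotate u hu).mem_iff).mp hx)
  have hc' : (c.rotate u hu).IsCycle := hc.rotate hu
  obtain ⟨b, hb, p, hp⟩ : ∃ b, ∃ h : G.Adj u b, ∃ p : G.Walk b u,
      c.rotate u hu = Walk.cons h p := by
    cases h : c.rotate u hu with
    | nil => exact absurd (h ▸ hc') Walk.IsCycle.not_of_nil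
    | cons h' p' => exact ⟨_, h', p', rfl⟩
  have hpath : p.IsPath := ((Walk.cons_isCycle_iff p hb).mp (hp ▸ hc')).1
  obtain ⟨a, ha, p2, hp2⟩ := Walk.exists_eq_cons_of_ne hb.ne p.reverse
  refine ⟨a, b, ?_, ha, hb, ?_, ?_⟩
  · rintro rfl
    have : p2.IsPath := Walk.IsPath.of_cons (hp2 ▸ hpath.reverse)
    have h2 : p2 = Walk.nil := (Walk.isPath_iff_eq_nil (p := p2)).mp this
    have hlen : (c.rotate u hu).length = 2 := by
      have : p.reverse.length = 1 := by rw [hp2, h2]; simp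
      rw [Walk.length_reverse] at this
      rw [hp, Walk.length_cons, this]
    have := hc'.three_le_length
    omega
  · apply hmem
    rw [hp, Walk.support_cons]
    have : a ∈ p.support := by
      have : a ∈ p.reverse.support := by rw [hp2]; simp
      rwa [Walk.support_reverse, List.mem_reverse] at this
    exact List.mem_cons_of_mem _ this
  · apply hmem
    rw [hp, Walk.support_cons]
    exact List.mem_cons_of_mem _ p.start_mem_support

lemma adj_inl {α β : Type*} {D : Set (α × β)} {q : α} {X : α ⊕ β}
    (h : (diagGraph D).Adj (Sum.inl q) X) : ∃ x, X = Sum.inr x ∧ (q, x) ∈ D := by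
  obtain ⟨i, j, hij, ⟨h1, h2⟩ | ⟨h1, h2⟩⟩ := h
  · obtain rfl : q = i := by simpa using h1
    exact ⟨j, h2, hij⟩
  · simp at h1

lemma adj_inr {α β : Type*} {D : Set (α × β)} {y : β} {A : α ⊕ β}
    (h : (diagGraph D).Adj (Sum.inr y) A) : ∃ p, A = Sum.inl p ∧ (p, y) ∈ D := by
  obtain ⟨i, j, hij, ⟨h1, h2⟩ | ⟨h1, h2⟩⟩ := h
  · simp at h1
  · obtain rfl : y = j := by simpa using h1
    exact ⟨i, h2, hij⟩

/-- From a cycle in the bipartite graph of `D`, extract a row `q`, a smaller row `p`, and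
columns `x < y` with `(q,x), (q,y), (p,y) ∈ D`. -/
lemma extract {α β : Type*} [LinearOrder α] [LinearOrder β] {D : Set (α × β)}
    (h : ¬(diagGraph D).IsAcyclic) :
    ∃ p q x y, p < q ∧ x < y ∧ (q, x) ∈ D ∧ (q, y) ∈ D ∧ (p, y) ∈ D := by
  classical
  simp only [SimpleGraph.IsAcyclic, not_forall, not_not] at h
  obtain ⟨v, c, hc⟩ := h
  set L : List α := c.support.filterMap (fun z => z.elim some (fun _ => none)) with hL
  have hmemL : ∀ a : α, a ∈ L ↔ Sum.inl a ∈ c.support := by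
    intro a
    rw [hL, List.mem_filterMap]
    constructor
    · rintro ⟨z, hz, he⟩
      cases z with
      | inl a' => simp at he; subst he; exact hz
      | inr b' => simp at he
    · intro hz; exact ⟨Sum.inl a, hz, rfl⟩
  have hLne : L.toFinset.Nonempty := by
    obtain ⟨A, B, hAB, hA, hB, hAs, hBs⟩ := two_neighbors hc c.start_mem_support
    cases hv : v with
    | inl r => exact ⟨r, by rw [List.mem_toFinset, hmemL]; exact hv ▸ c.start_mem_support⟩
    | inr j =>
      obtain ⟨p, rfl, _⟩ := adj_inr (hv ▸ hA)
      exact ⟨p, by rw [List.mem_toFinset, hmemL]; exact hAs⟩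
  set q := L.toFinset.max' hLne with hqdef
  have hqs : Sum.inl q ∈ c.support := by
    rw [← hmemL, ← List.mem_toFinset]; exact L.toFinset.max'_mem hLne
  have hqmax : ∀ a : α, Sum.inl a ∈ c.support → a ≤ q := by
    intro a ha
    exact L.toFinset.le_max' a (by rw [List.mem_toFinset, hmemL]; exact ha)
  obtain ⟨X, Y, hXY, hX, hY, hXs, hYs⟩ := two_neighbors hc hqs
  obtain ⟨x, rfl, hqx⟩ := adj_inl hX
  obtain ⟨y, rfl, hqy⟩ := adj_inl hY
  have hxy : x ≠ y := fun e => hXY (by rw [e])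
  rcases hxy.lt_or_gt with hlt | hlt
  · obtain ⟨A, B, hAB, hA, hB, hAs, hBs⟩ := two_neighbors hc hYs
    obtain ⟨p1, rfl, hp1⟩ := adj_inr hA
    obtain ⟨p2, rfl, hp2⟩ := adj_inr hB
    have hne : p1 ≠ p2 := fun e => hAB (by rw [e])
    rcases hne.lt_or_gt with h12 | h12
    · exact ⟨p1, q, x, y, lt_of_lt_of_le h12 (hqmax p2 hBs), hlt, hqx, hqy, hp1⟩
    · exact ⟨p2, q, x, y, lt_of_lt_of_le h12 (hqmax p1 hAs), hlt, hqx, hqy, hp2⟩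
  · obtain ⟨A, B, hAB, hA, hB, hAs, hBs⟩ := two_neighbors hc hXs
    obtain ⟨p1, rfl, hp1⟩ := adj_inr hA
    obtain ⟨p2, rfl, hp2⟩ := adj_inr hB
    have hne : p1 ≠ p2 := fun e => hAB (by rw [e])
    rcases hne.lt_or_gt with h12 | h12
    · exact ⟨p1, q, y, x, lt_of_lt_of_le h12 (hqmax p2 hBs), hlt, hqy, hqx, hp1⟩
    · exact ⟨p2, q, y, x, lt_of_lt_of_le h12 (hqmax p1 hAs), hlt, hqy, hqx, hp2⟩

/-- The Rothe diagram is northwest. -/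
lemma rothe_nw {n : ℕ} (w : Equiv.Perm (Fin n)) {a c b d : Fin n}
    (h1 : Rothe w (a, d)) (h2 : Rothe w (c, b)) (hac : a < c) (hbd : b < d) :
    Rothe w (a, b) := by
  obtain ⟨k, hak, hka, hd⟩ := h1
  obtain ⟨j, hcj, hjc, hb⟩ := h2
  refine ⟨j, lt_trans hac hcj, ?_, hb⟩
  have : w j < w k := by rw [← hb, ← hd] at *; exact hbd
  exact this.trans hka

lemma fk0 (h : 0 < 4) : (⟨0, h⟩ : Fin 4) = 0 := rfl
lemma fk1 (h : 1 < 4) : (⟨1, h⟩ : Fin 4) = 1 := rfl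
lemma fk2 (h : 2 < 4) : (⟨2, h⟩ : Fin 4) = 2 := rfl
lemma fk3 (h : 3 < 4) : (⟨3, h⟩ : Fin 4) = 3 := rfl

lemma sm4 {n : ℕ} {p q r s : Fin n} (h1 : p < q) (h2 : q < r) (h3 : r < s) :
    StrictMono ![p, q, r, s] := by
  intro a b hab
  fin_cases a <;> fin_cases b <;>
    first
      | exact absurd hab (by decide)
      | (show _ < _
         simp only [fk0, fk1, fk2, fk3, Matrix.cons_val_zero, Matrix.cons_val_one,
           Matrix.head_cons, Matrix.cons_val_two, Matrix.tail_cons, Matrix.cons_val_three]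
         first
           | exact h1
           | exact h2
           | exact h3
           | exact h1.trans h2
           | exact h2.trans h3
           | exact (h1.trans h2).trans h3)

/-- From a 2×2 square in the Rothe diagram, extract one of the four patterns. -/
lemma pattern_of_square {n : ℕ} (w : Equiv.Perm (Fin n)) {p q x y : Fin n}
    (hpq : p < q) (hxy : x < y)
    (h1 : Rothe w (p, x)) (h2 : Rothe w (p, y)) (h3 : Rothe w (q, x)) (h4 : Rothe w (q, y)) :
    Contains w ![2, 3, 0, 1] ∨ Contains w ![3, 2, 0, 1] ∨
      Contains w ![2, 3, 1, 0] ∨ Contains w ![3, 2, 1, 0] := by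
  obtain ⟨j1, hqj1, hj1q, hx1⟩ := h3
  obtain ⟨j2, hqj2, hj2q, hy2⟩ := h4
  obtain ⟨i1, hpi1, hi1p, hx2⟩ := h1
  obtain ⟨i2, hpi2, hi2p, hy1⟩ := h2
  simp only at hx1 hy2 hx2 hy1 hj1q hj2q hi1p hi2p hqj1 hqj2 hpi1 hpi2
  obtain rfl : i1 = j1 := w.injective (hx2.symm.trans hx1)
  obtain rfl : i2 = j2 := w.injective (hy1.symm.trans hy2)
  -- numerical facts
  have n12 : (w i1 : ℕ) < w i2 := by
    have : w i1 < w i2 := by rw [← hx1, ← hy2]; exact hxy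
    exact this
  have n1p : (w i1 : ℕ) < w p := hi1p
  have n2p : (w i2 : ℕ) < w p := hi2p
  have n1q : (w i1 : ℕ) < w q := hj1q
  have n2q : (w i2 : ℕ) < w q := hj2q
  have hj12 : i1 ≠ i2 := by
    rintro rfl; exact absurd n12 (lt_irrefl _)
  have hwpq : w p ≠ w q := fun e => absurd (w.injective e) hpq.ne
  rcases hj12.lt_or_gt with hj | hj
  · -- positions p < q < i1 < i2, values w i1 < w i2 (both below w p, w q)
    rcases hwpq.lt_or_gt with hw | hw
    · refine Or.inl ⟨![p, q, i1, i2], sm4 hpq hqj1 hj, ?_⟩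
      have hw' : (w p : ℕ) < w q := hw
      intro a b
      fin_cases a <;> fin_cases b <;>
        simp only [fk0, fk1, fk2, fk3, Matrix.cons_val_zero, Matrix.cons_val_one,
          Matrix.head_cons, Matrix.cons_val_two, Matrix.tail_cons, Matrix.cons_val_three,
          Fin.lt_def] <;>
        simp only [Fin.val_zero, Fin.val_one, show ((3:Fin 4):ℕ) = 3 from rfl,
          show ((2:Fin 4):ℕ) = 2 from rfl] <;> omega
    · refine Or.inr (Or.inl ⟨![p, q, i1, i2], sm4 hpq hqj1 hj, ?_⟩)
      have hw' : (w q : ℕ) < w p := hw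
      intro a b
      fin_cases a <;> fin_cases b <;>
        simp only [fk0, fk1, fk2, fk3, Matrix.cons_val_zero, Matrix.cons_val_one,
          Matrix.head_cons, Matrix.cons_val_two, Matrix.tail_cons, Matrix.cons_val_three,
          Fin.lt_def] <;>
        simp only [Fin.val_zero, Fin.val_one, show ((3:Fin 4):ℕ) = 3 from rfl,
          show ((2:Fin 4):ℕ) = 2 from rfl] <;> omega
  · -- positions p < q < i2 < i1, values w i1 < w i2
    rcases hwpq.lt_or_gt with hw | hw
    · refine Or.inr (Or.inr (Or.inl ⟨![p, q, i2, i1], sm4 hpq hqj2 hj, ?_⟩))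
      have hw' : (w p : ℕ) < w q := hw
      intro a b
      fin_cases a <;> fin_cases b <;>
        simp only [fk0, fk1, fk2, fk3, Matrix.cons_val_zero, Matrix.cons_val_one,
          Matrix.head_cons, Matrix.cons_val_two, Matrix.tail_cons, Matrix.cons_val_three,
          Fin.lt_def] <;>
        simp only [Fin.val_zero, Fin.val_one, show ((3:Fin 4):ℕ) = 3 from rfl,
          show ((2:Fin 4):ℕ) = 2 from rfl] <;> omega
    · refine Or.inr (Or.inr (Or.inr ⟨![p, q, i2, i1], sm4 hpq hqj2 hj, ?_⟩))
      have hw' : (w q : ℕ) < w p := hw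
      intro a b
      fin_cases a <;> fin_cases b <;>
        simp only [fk0, fk1, fk2, fk3, Matrix.cons_val_zero, Matrix.cons_val_one,
          Matrix.head_cons, Matrix.cons_val_two, Matrix.tail_cons, Matrix.cons_val_three,
          Fin.lt_def] <;>
        simp only [Fin.val_zero, Fin.val_one, show ((3:Fin 4):ℕ) = 3 from rfl,
          show ((2:Fin 4):ℕ) = 2 from rfl] <;> omega

end Aux

/-- If the bipartite graph of the Rothe diagram of `w` contains a cycle, then `w` contains
one of the patterns `3412`, `4312`, `3421`, `4321`; in particular, any (finite) northwest
diagram whose bipartite graph contains a cycle contains a full 2×2 square. -/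
theorem stmt11 {n : ℕ} (w : Equiv.Perm (Fin n)) (D : Set (ℕ × ℕ)) (hD : D.Finite)
    (hNW : ∀ a b c d : ℕ, (a, d) ∈ D → (c, b) ∈ D → a < c → b < d → (a, b) ∈ D) :
    (¬ (diagGraph {c : Fin n × Fin n | Rothe w c}).IsAcyclic →
      (Contains w ![2, 3, 0, 1] ∨ Contains w ![3, 2, 0, 1] ∨
        Contains w ![2, 3, 1, 0] ∨ Contains w ![3, 2, 1, 0])) ∧
    (¬ (diagGraph D).IsAcyclic →
      ∃ p q x y : ℕ, p < q ∧ x < y ∧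
        (p, x) ∈ D ∧ (p, y) ∈ D ∧ (q, x) ∈ D ∧ (q, y) ∈ D) := by
  constructor
  · intro h
    obtain ⟨p, q, x, y, hpq, hxy, hqx, hqy, hpy⟩ := extract h
    simp only [Set.mem_setOf_eq] at hqx hqy hpy
    have hpx : Rothe w (p, x) := rothe_nw w hpy hqx hpq hxy
    exact pattern_of_square w hpq hxy hpx hpy hqx hqy
  · intro h
    obtain ⟨p, q, x, y, hpq, hxy, hqx, hqy, hpy⟩ := extract h
    exact ⟨p, q, x, y, hpq, hxy, hNW p x q y hpy hqx hpq hxy, hpy, hqx, hqy⟩
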